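/- The cost-exceeding always operator is expressible via the parameterized eventually: for every cPLTL formula φ, every cost-trace w, every position n, and every variable valuation α, (w,n,α) ⊨ G_{>x} φ if and only if (w,n,α) ⊨ F_{≤x} G X (¬κ ∨ G φ). -/

import Mathlib

/-- A cost-trace: an infinite sequence of sets of atomic propositions interleaved
with natural-number costs. -/
structure Trace (P : Type) where
  state : ℕ → Set P
  cost : ℕ → ℕ

/-- The requirement that the distinguished proposition `κ` holds at a position iff
the last step had non-zero cost. -/
def Trace.Valid {P : Type} (κ : P) (w : Trace P) : Prop :=
  ∀ n, 0 < w.cost n ↔ κ ∈ w.state (n + 1)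

/-- The cost of the finite infix `wₙ cₙ ⋯ c_{n+j-1} w_{n+j}`. -/
def Trace.cst {P : Type} (w : Trace P) (n j : ℕ) : ℕ :=
  ∑ i ∈ Finset.range j, w.cost (n + i)
/-- Formulas of cPLTL in negation normal form. -/
inductive CPLTL (P : Type) (Var : Type) where
  | pos : P → CPLTL P Var
  | nneg : P → CPLTL P Var
  | conj : CPLTL P Var → CPLTL P Var → CPLTL P Var
  | disj : CPLTL P Var → CPLTL P Var → CPLTL P Var
  | next : CPLTL P Var → CPLTL P Var
  | until_ : CPLTL P Var → CPLTL P Var → CPLTL P Var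
  | release : CPLTL P Var → CPLTL P Var → CPLTL P Var
  | fleq : Var → CPLTL P Var → CPLTL P Var
  | gleq : Var → CPLTL P Var → CPLTL P Var

namespace CPLTL

variable {P Var : Type}

/-- The satisfaction relation `(w, n, α) ⊨ φ`. -/
def Sat (w : Trace P) (α : Var → ℕ) : ℕ → CPLTL P Var → Prop
  | n, pos p => p ∈ w.state n
  | n, nneg p => p ∉ w.state n
  | n, conj φ ψ => Sat w α n φ ∧ Sat w α n ψ
  | n, disj φ ψ => Sat w α n φ ∨ Sat w α n ψ
  | n, next φ => Sat w α (n + 1) φ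
  | n, until_ φ ψ => ∃ j, Sat w α (n + j) ψ ∧ ∀ k, k < j → Sat w α (n + k) φ
  | n, release φ ψ => ∀ j, Sat w α (n + j) ψ ∨ ∃ k, k < j ∧ Sat w α (n + k) φ
  | n, fleq z φ => ∃ j, w.cst n j ≤ α z ∧ Sat w α (n + j) φ
  | n, gleq z φ => ∀ j, w.cst n j ≤ α z → Sat w α (n + j) φ

/-- The variables parameterizing eventually operators. -/
def varF : CPLTL P Var → Set Var
  | pos _ => ∅
  | nneg _ => ∅
  | conj φ ψ => varF φ ∪ varF ψ
  | disj φ ψ => varF φ ∪ varF ψ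
  | next φ => varF φ
  | until_ φ ψ => varF φ ∪ varF ψ
  | release φ ψ => varF φ ∪ varF ψ
  | fleq z φ => insert z (varF φ)
  | gleq _ φ => varF φ

/-- The variables parameterizing always operators. -/
def varG : CPLTL P Var → Set Var
  | pos _ => ∅
  | nneg _ => ∅
  | conj φ ψ => varG φ ∪ varG ψ
  | disj φ ψ => varG φ ∪ varG ψ
  | next φ => varG φ
  | until_ φ ψ => varG φ ∪ varG ψ
  | release φ ψ => varG φ ∪ varG ψ
  | fleq _ φ => varG φ
  | gleq z φ => insert z (varG φ)

/-- The set of subformulas of a formula. -/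
def cl : CPLTL P Var → Set (CPLTL P Var)
  | pos p => {pos p}
  | nneg p => {nneg p}
  | conj φ ψ => insert (conj φ ψ) (cl φ ∪ cl ψ)
  | disj φ ψ => insert (disj φ ψ) (cl φ ∪ cl ψ)
  | next φ => insert (next φ) (cl φ)
  | until_ φ ψ => insert (until_ φ ψ) (cl φ ∪ cl ψ)
  | release φ ψ => insert (release φ ψ) (cl φ ∪ cl ψ)
  | fleq z φ => insert (fleq z φ) (cl φ)
  | gleq z φ => insert (gleq z φ) (cl φ)

/-- The size of a formula: the number of its subformulas. -/
noncomputable def size (φ : CPLTL P Var) : ℕ := (cl φ).ncard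

/-- The negation of a formula, defined via the dualities of the operators. -/
def negate : CPLTL P Var → CPLTL P Var
  | pos p => nneg p
  | nneg p => pos p
  | conj φ ψ => disj (negate φ) (negate ψ)
  | disj φ ψ => conj (negate φ) (negate ψ)
  | next φ => next (negate φ)
  | until_ φ ψ => release (negate φ) (negate ψ)
  | release φ ψ => until_ (negate φ) (negate ψ)
  | fleq z φ => gleq z (negate φ)
  | gleq z φ => fleq z (negate φ)

/-- A formula is well-formed if no variable parameterizes both an eventually and
an always operator. -/
def WellFormed (φ : CPLTL P Var) : Prop := varF φ ∩ varG φ = ∅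

/-- LTL formulas: no parameterized operators. -/
def IsLTL (φ : CPLTL P Var) : Prop := varF φ = ∅ ∧ varG φ = ∅

/-- cPLTL_F formulas: no parameterized always operators. -/
def IsF (φ : CPLTL P Var) : Prop := varG φ = ∅

/-- cPLTL_G formulas: no parameterized eventually operators. -/
def IsG (φ : CPLTL P Var) : Prop := varF φ = ∅

end CPLTL
/-- Semantics of the parameterized until `φ U_{≤z} ψ`. -/
def SatUntilLe {P Var : Type} (w : Trace P) (α : Var → ℕ) (n : ℕ) (z : Var)
    (φ ψ : CPLTL P Var) : Prop :=
  ∃ j, w.cst n j ≤ α z ∧ CPLTL.Sat w α (n + j) ψ ∧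
    ∀ k, k < j → CPLTL.Sat w α (n + k) φ

/-- Semantics of the parameterized release `φ R_{≤z} ψ`. -/
def SatReleaseLe {P Var : Type} (w : Trace P) (α : Var → ℕ) (n : ℕ) (z : Var)
    (φ ψ : CPLTL P Var) : Prop :=
  ∀ j, w.cst n j ≤ α z →
    (CPLTL.Sat w α (n + j) ψ ∨ ∃ k, k < j ∧ CPLTL.Sat w α (n + k) φ)

/-- Semantics of the cost-exceeding eventually `F_{>z} φ`. -/
def SatFGt {P Var : Type} (w : Trace P) (α : Var → ℕ) (n : ℕ) (z : Var)
    (φ : CPLTL P Var) : Prop :=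
  ∃ j, α z < w.cst n j ∧ CPLTL.Sat w α (n + j) φ

/-- Semantics of the cost-exceeding always `G_{>z} φ`. -/
def SatGGt {P Var : Type} (w : Trace P) (α : Var → ℕ) (n : ℕ) (z : Var)
    (φ : CPLTL P Var) : Prop :=
  ∀ j, α z < w.cst n j → CPLTL.Sat w α (n + j) φ

/-- `tt`, defined as `κ ∨ ¬κ` for the fixed proposition `κ`. -/
def ttF {P Var : Type} (κ : P) : CPLTL P Var := .disj (.pos κ) (.nneg κ)

/-- `ff`, defined as `κ ∧ ¬κ` for the fixed proposition `κ`. -/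
def ffF {P Var : Type} (κ : P) : CPLTL P Var := .conj (.pos κ) (.nneg κ)

/-- The derived eventually operator `F φ = tt U φ`. -/
def evF {P Var : Type} (κ : P) (φ : CPLTL P Var) : CPLTL P Var := .until_ (ttF κ) φ

/-- The derived always operator `G φ = ff R φ`. -/
def alG {P Var : Type} (κ : P) (φ : CPLTL P Var) : CPLTL P Var := .release (ffF κ) φ

lemma sat_ffF {P Var : Type} (κ : P) (w : Trace P) (α : Var → ℕ) (m : ℕ) :
    ¬ CPLTL.Sat w α m (ffF κ : CPLTL P Var) := fun ⟨h1, h2⟩ => h2 h1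

lemma sat_alG {P Var : Type} (κ : P) (ψ : CPLTL P Var) (w : Trace P) (α : Var → ℕ) (m : ℕ) :
    CPLTL.Sat w α m (alG κ ψ) ↔ ∀ k, CPLTL.Sat w α (m + k) ψ := by
  constructor
  · intro h k
    rcases h k with h | ⟨l, _, hl⟩
    · exact h
    · exact absurd hl (sat_ffF κ w α _)
  · intro h k; exact Or.inl (h k)

lemma cst_mono {P : Type} (w : Trace P) (n : ℕ) {j m : ℕ} (h : j ≤ m) :
    w.cst n j ≤ w.cst n m :=
  Finset.sum_le_sum_of_subset (Finset.range_mono h)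

lemma cst_succ {P : Type} (w : Trace P) (n j : ℕ) :
    w.cst n (j + 1) = w.cst n j + w.cost (n + j) :=
  Finset.sum_range_succ _ _

lemma exists_pos_cost {P : Type} (w : Trace P) (n : ℕ) {j m : ℕ}
    (h : w.cst n j < w.cst n m) : ∃ i, j ≤ i ∧ i < m ∧ 0 < w.cost (n + i) := by
  by_contra hc
  push_neg at hc
  have hjm : j ≤ m := by
    by_contra hjm
    exact absurd (cst_mono w n (le_of_not_ge hjm)) (not_le.2 h)
  have : w.cst n m = w.cst n j + ∑ i ∈ Finset.Ico j m, w.cost (n + i) := by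
    rw [Trace.cst, Trace.cst, Finset.range_eq_Ico, Finset.range_eq_Ico]
    exact (Finset.sum_Ico_consecutive _ (Nat.zero_le j) hjm).symm
  have hz : ∑ i ∈ Finset.Ico j m, w.cost (n + i) = 0 := by
    apply Finset.sum_eq_zero
    intro i hi
    simp only [Finset.mem_Ico] at hi
    exact Nat.le_zero.1 (hc i hi.1 hi.2)
  omega

lemma mono_bdd_exists_max {f : ℕ → ℕ} (_hf : Monotone f) {B : ℕ} (hB : ∀ m, f m ≤ B) :
    ∃ j, ∀ m, f m ≤ f j := by
  by_contra hc
  push_neg at hc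
  have key : ∀ k, ∃ m, k ≤ f m := by
    intro k
    induction k with
    | zero => exact ⟨0, Nat.zero_le _⟩
    | succ k ih =>
      obtain ⟨m, hm⟩ := ih
      obtain ⟨m', hm'⟩ := hc m
      exact ⟨m', by omega⟩
  obtain ⟨m, hm⟩ := key (B + 1)
  exact absurd (hB m) (by omega)

/-- `G_{>x} φ ≡ F_{≤x} G X (¬κ ∨ G φ)`. -/
theorem g_gt_expressible {P Var : Type} [Infinite Var] (κ : P)
    (φ : CPLTL P Var) (w : Trace P) (hw : w.Valid κ) (n : ℕ)
    (α : Var → ℕ) (x : Var) :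
    SatGGt w α n x φ ↔
      CPLTL.Sat w α n (.fleq x (alG κ (.next (.disj (.nneg κ) (alG κ φ))))) := by
  constructor
  · intro hG
    by_cases hex : ∃ m, α x < w.cst n m
    · -- take least j with cst n (j+1) > α x
      obtain ⟨m, hm⟩ := hex
      have hne : ∃ j, α x < w.cst n (j + 1) := by
        rcases m with _ | m
        · simp [Trace.cst] at hm
        · exact ⟨m, hm⟩
      classical
      set j := Nat.find hne with hj
      have hj1 : α x < w.cst n (j + 1) := Nat.find_spec hne
      have hjle : w.cst n j ≤ α x := by
        rcases Nat.eq_zero_or_pos j with h0 | h0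
        · simp [h0, Trace.cst]
        · have := Nat.find_min hne (m := j - 1) (by omega)
          have : ¬ α x < w.cst n (j - 1 + 1) := this
          have hje : j - 1 + 1 = j := by omega
          rw [hje] at this
          omega
      refine ⟨j, hjle, ?_⟩
      rw [sat_alG]
      intro k
      show CPLTL.Sat w α (n + j + k + 1) (CPLTL.disj (.nneg κ) (alG κ φ))
      right
      rw [sat_alG]
      intro l
      have : α x < w.cst n (j + k + 1 + l) :=
        lt_of_lt_of_le hj1 (cst_mono w n (by omega))
      have := hG _ this
      have harith : n + (j + k + 1 + l) = n + j + k + 1 + l := by ring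
      rwa [harith] at this
    · -- cst bounded: monotone bounded, find max, all later costs zero
      push_neg at hex
      obtain ⟨j, hjmax⟩ := mono_bdd_exists_max
        (f := fun m => w.cst n m) (fun _ _ h => cst_mono w n h) hex
      refine ⟨j, hex j, ?_⟩
      rw [sat_alG]
      intro k
      show CPLTL.Sat w α (n + j + k + 1) (CPLTL.disj (.nneg κ) (alG κ φ))
      left
      show κ ∉ w.state (n + j + k + 1)
      intro hk
      have hκ : κ ∈ w.state ((n + (j + k)) + 1) := by
        have : n + (j + k) + 1 = n + j + k + 1 := by ring
        rwa [this]
      have hpos : 0 < w.cost (n + (j + k)) := (hw (n + (j + k))).2 hκ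
      have h1 : w.cst n (j + k) ≤ w.cst n j := hjmax _
      have h2 : w.cst n (j + k + 1) ≤ w.cst n j := hjmax _
      have h3 : w.cst n j ≤ w.cst n (j + k) := cst_mono w n (by omega)
      have := cst_succ w n (j + k)
      omega
  · rintro ⟨j, hjle, hsat⟩
    rw [sat_alG] at hsat
    intro m hm
    have hjm : j < m := by
      by_contra h
      exact absurd (le_trans (cst_mono w n (le_of_not_gt h)) hjle) (not_le.2 hm)
    obtain ⟨i, hji, him, hipos⟩ := exists_pos_cost w n (lt_of_le_of_lt hjle hm)
    have hκ : κ ∈ w.state (n + i + 1) := by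
      have := (hw (n + i)).1 hipos
      rwa [show n + i + 1 = n + i + 1 from rfl]
    have hk := hsat (i - j)
    have harith : n + j + (i - j) = n + i := by omega
    rw [harith] at hk
    rcases hk with hk | hk
    · exact absurd hκ hk
    · rw [sat_alG] at hk
      have := hk (m - i - 1)
      have harith2 : n + i + 1 + (m - i - 1) = n + m := by omega
      rwa [harith2] at this
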